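/- Let D be a triangulated category, A the heart of a bounded t-structure on D with cohomology functor H, and (T, F) a torsion pair in A. Then the full subcategory A^♯ = {E ∈ D : H^i(E) = 0 for i ∉ {-1, 0}, H^{-1}(E) ∈ F, H^0(E) ∈ T} is the heart of a bounded t-structure on D. -/

import Mathlib

open CategoryTheory CategoryTheory.Limits CategoryTheory.Pretriangulated

universe v u

variable {D : Type u} [Category.{v} D] [HasZeroObject D] [Preadditive D] [HasShift D ℤ]
  [∀ n : ℤ, (shiftFunctor D n).Additive] [Pretriangulated D]

/-- A full subcategory (given by a class of objects) `A` of a triangulated category is the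
heart of a bounded t-structure iff `Hom(A₁, A₂[k]) = 0` for `k < 0` and every nonzero
object admits a finite filtration by distinguished triangles whose factors are shifts
`A'[k]` of objects of `A` with strictly decreasing shifts. -/
def IsHeartOfBoundedTStructure (A : Set D) : Prop :=
  (∀ A₁ ∈ A, ∀ A₂ ∈ A, ∀ k : ℤ, k < 0 → ∀ f : A₁ ⟶ (shiftFunctor D k).obj A₂, f = 0) ∧
  (∀ E : D, ¬ IsZero E →
    ∃ (n : ℕ) (Fl : Fin (n + 1) → D) (g : ∀ i : Fin n, Fl i.castSucc ⟶ Fl i.succ)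
      (ks : Fin n → ℤ),
      IsZero (Fl 0) ∧ Fl (Fin.last n) = E ∧ (∀ i j : Fin n, i < j → ks j < ks i) ∧
      ∀ i : Fin n, ∃ (Q : D) (q : Fl i.succ ⟶ Q)
        (h : Q ⟶ (shiftFunctor D (1 : ℤ)).obj (Fl i.castSucc)),
        (Triangle.mk (g i) q h ∈ distTriang D) ∧
        ∃ A' ∈ A, Nonempty (Q ≅ (shiftFunctor D (ks i)).obj A'))

/-- The extension closure of a class of objects `S` of a triangulated category: the
smallest class containing the zero objects and `S` which is closed under extensions. -/
inductive ExtClosure (S : Set D) : D → Prop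
  | zero (E : D) : IsZero E → ExtClosure S E
  | of (E : D) : E ∈ S → ExtClosure S E
  | ext (A B C : D) (f : A ⟶ B) (g : B ⟶ C)
      (h : C ⟶ (shiftFunctor D (1 : ℤ)).obj A) :
      (Triangle.mk f g h ∈ distTriang D) → ExtClosure S A → ExtClosure S C →
      ExtClosure S B

variable (D) in
/-- A slicing of a triangulated category: full subcategories `P φ` of semistable objects
of phase `φ` with compatibility with shifts, vanishing of morphisms of decreasing phases
and Harder–Narasimhan filtrations. -/
structure Slicing where
  /-- the semistable objects of phase `φ` -/
  P : ℝ → Set D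
  shift_P : ∀ (φ : ℝ) (E : D), E ∈ P φ ↔ (shiftFunctor D (1 : ℤ)).obj E ∈ P (φ + 1)
  hom_zero : ∀ φ₁ φ₂ : ℝ, φ₂ < φ₁ → ∀ A ∈ P φ₁, ∀ B ∈ P φ₂, ∀ f : A ⟶ B, f = 0
  hn : ∀ E : D, ¬ IsZero E →
    ∃ (n : ℕ) (Fl : Fin (n + 1) → D) (g : ∀ i : Fin n, Fl i.castSucc ⟶ Fl i.succ)
      (φs : Fin n → ℝ),
      IsZero (Fl 0) ∧ Fl (Fin.last n) = E ∧ (∀ i j : Fin n, i < j → φs j < φs i) ∧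
      ∀ i : Fin n, ∃ (Q : D) (q : Fl i.succ ⟶ Q)
        (h : Q ⟶ (shiftFunctor D (1 : ℤ)).obj (Fl i.castSucc)),
        Q ∈ P (φs i) ∧ (Triangle.mk (g i) q h ∈ distTriang D)

variable (D) in
/-- A stability condition `σ = (Z, P)` on a triangulated category: a slicing `P` together
with a central charge `Z` mapping nonzero objects of `P φ` to `ℝ_{>0}·exp(iπφ)`. -/
structure StabilityCondition extends Slicing D where
  /-- the central charge -/
  Z : D → ℂ
  Z_pos : ∀ φ : ℝ, ∀ E ∈ P φ, ¬ IsZero E → ∃ r : ℝ, 0 < r ∧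
    Z E = (r : ℂ) * Complex.exp ((φ : ℂ) * (Real.pi : ℂ) * Complex.I)

/-- A simple (= stable) object of phase `φ` of a slicing: a nonzero object of `P φ` which
admits no decomposition by a distinguished triangle with nonzero outer terms in `P φ`. -/
def Slicing.Simple (σ : Slicing D) (φ : ℝ) (E : D) : Prop :=
  E ∈ σ.P φ ∧ ¬ IsZero E ∧
    ∀ (A B : D) (f : A ⟶ E) (g : E ⟶ B) (h : B ⟶ (shiftFunctor D (1 : ℤ)).obj A),
      A ∈ σ.P φ → B ∈ σ.P φ → (Triangle.mk f g h ∈ distTriang D) →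
      IsZero A ∨ IsZero B

/-- `P I` for an interval `I ⊆ ℝ`: the extension closure of the `P φ`, `φ ∈ I`. -/
def Slicing.PInt (σ : Slicing D) (I : Set ℝ) : Set D :=
  {E | ExtClosure (⋃ φ ∈ I, σ.P φ) E}


namespace HRSAux

section
set_option linter.unusedSectionVars false
set_option maxHeartbeats 1600000

variable {D : Type u} [Category.{v} D] [HasZeroObject D] [Preadditive D] [HasShift D ℤ]
  [∀ n : ℤ, (shiftFunctor D n).Additive] [Pretriangulated D]

open CategoryTheory.Category

lemma hz_tgt {P Q R : D} (e : Q ≅ R) (h : ∀ g : P ⟶ R, g = 0) (f : P ⟶ Q) : f = 0 := by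
  have h1 : f ≫ e.hom = 0 := h _
  have h2 : f = (f ≫ e.hom) ≫ e.inv := by simp
  rw [h2, h1, zero_comp]

lemma hz_src {P P' Q : D} (e : P' ≅ P) (h : ∀ g : P' ⟶ Q, g = 0) (f : P ⟶ Q) : f = 0 := by
  have h1 : e.hom ≫ f = 0 := h _
  have h2 : f = e.inv ≫ (e.hom ≫ f) := by simp
  rw [h2, h1, comp_zero]

lemma hz_shift {P Q : D} (n : ℤ) (h : ∀ g : P ⟶ Q, g = 0) (f : P⟦n⟧ ⟶ Q⟦n⟧) : f = 0 := by
  have := Functor.map_preimage (shiftFunctor D n) f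
  rw [← this, h ((shiftFunctor D n).preimage f), Functor.map_zero]

lemma isZero_shift {P : D} (h : IsZero P) (n : ℤ) : IsZero (P⟦n⟧) := by
  rw [IsZero.iff_id_eq_zero] at h ⊢
  rw [← CategoryTheory.Functor.map_id, h, Functor.map_zero]

lemma RL {A B C X Y : D} (f : A ⟶ B) (g : B ⟶ C) (h : C ⟶ A⟦(1:ℤ)⟧)
    (hT1 : Triangle.mk f g h ∈ distTriang D)
    (a : X ⟶ C) (b : C ⟶ Y) (c : Y ⟶ X⟦(1:ℤ)⟧)
    (hT2 : Triangle.mk a b c ∈ distTriang D)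
    (V1 : ∀ φ : A⟦(1:ℤ)⟧ ⟶ Y, φ = 0)
    (V3 : ∀ φ : A⟦(1:ℤ)⟧ ⟶ Y⟦(-1:ℤ)⟧, φ = 0)
    (V4 : ∀ φ : X ⟶ Y, φ = 0)
    (V5 : ∀ φ : X ⟶ Y⟦(-1:ℤ)⟧, φ = 0)
    (V7 : ∀ φ : X⟦(1:ℤ)⟧ ⟶ Y, φ = 0)
    (V8 : ∀ φ : Y⟦(1:ℤ)⟧ ⟶ Y, φ = 0) :
    ∃ (M : D) (l : A ⟶ M) (p : M ⟶ X) (e : X ⟶ A⟦(1:ℤ)⟧)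
      (m : M ⟶ B) (ρ : B ⟶ Y) (s : Y ⟶ M⟦(1:ℤ)⟧),
      ρ = g ≫ b ∧ l ≫ m = f ∧
      (Triangle.mk l p e ∈ distTriang D) ∧ (Triangle.mk m ρ s ∈ distTriang D) := by
  obtain ⟨M, m, s, hTM⟩ := distinguished_cocone_triangle₁ (g ≫ b)
  have hfg : f ≫ g = 0 := comp_distTriang_mor_zero₁₂ _ hT1
  have hab : a ≫ b = 0 := comp_distTriang_mor_zero₁₂ _ hT2
  obtain ⟨l, hl⟩ := Triangle.coyoneda_exact₂ _ hTM f (by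
    unfold Triangle.mk; dsimp
    rw [← assoc, hfg, zero_comp])
  unfold Triangle.mk at l hl; dsimp at l hl
  obtain ⟨K, p, e, hTK⟩ := distinguished_cocone_triangle l
  obtain ⟨w, hw1, hw2⟩ := complete_distinguished_triangle_morphism
    (Triangle.mk l p e) (Triangle.mk f g h) hTK hT1 (𝟙 A) m
    (by unfold Triangle.mk; dsimp; rw [Category.id_comp, ← hl])
  unfold Triangle.mk at w hw1 hw2; dsimp at w hw1 hw2
  rw [CategoryTheory.Functor.map_id, comp_id] at hw2
  have hwb : w ≫ b = 0 := by
    have hmgb : m ≫ (g ≫ b) = 0 := comp_distTriang_mor_zero₁₂ _ hTM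
    obtain ⟨ξ, hξ⟩ := Triangle.yoneda_exact₃ _ hTK (w ≫ b) (by
      unfold Triangle.mk; dsimp
      rw [← assoc, hw1, assoc, hmgb])
    exact hξ.trans (by rw [V1 ξ]; exact comp_zero)
  obtain ⟨t, ht⟩ := Triangle.coyoneda_exact₂ _ hT2 w hwb
  unfold Triangle.mk at t ht; dsimp at t ht
  have he : e = t ≫ a ≫ h := by rw [hw2, ht, assoc]
  -- Hom(M⟦1⟧, Y) = 0
  have hM1Y : ∀ φ : M⟦(1:ℤ)⟧ ⟶ Y, φ = 0 := by
    intro φ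
    have hχ : s ≫ φ = 0 := by
      have h1 : b ≫ (s ≫ φ) = 0 := by
        have hgbs : (g ≫ b) ≫ s = 0 := comp_distTriang_mor_zero₂₃ _ hTM
        obtain ⟨ξ, hξ⟩ := Triangle.yoneda_exact₃ _ hT1 (b ≫ s ≫ φ) (by
          unfold Triangle.mk; dsimp
          simp only [← Category.assoc]
          rw [Category.assoc g b s, ← Category.assoc g, hgbs, zero_comp])
        exact hξ.trans (by rw [V1 ξ]; exact comp_zero)
      obtain ⟨ξ, hξ⟩ := Triangle.yoneda_exact₃ _ hT2 (s ≫ φ) h1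
      exact hξ.trans (by rw [V7 ξ]; exact comp_zero)
    have hrot2 := rot_of_distTriang _ (rot_of_distTriang _ hTM)
    obtain ⟨ψ, hψ⟩ := Triangle.yoneda_exact₂ _ hrot2 φ (by exact hχ)
    have hB1Y : ∀ ψ' : B⟦(1:ℤ)⟧ ⟶ Y, ψ' = 0 := by
      intro ψ'
      have hs1 := Triangle.shift_distinguished _ hT1 1
      obtain ⟨ψ₂, hψ₂⟩ : ∃ ψ₂ : C⟦(1:ℤ)⟧ ⟶ Y,
          ψ' = ((1:ℤ).negOnePow • (shiftFunctor D (1:ℤ)).map g) ≫ ψ₂ :=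
        Triangle.yoneda_exact₂ _ hs1 ψ' (by
        show ((1:ℤ).negOnePow • (shiftFunctor D (1:ℤ)).map f) ≫ ψ' = 0
        rw [Linear.units_smul_comp, V1 ((shiftFunctor D (1:ℤ)).map f ≫ ψ'), smul_zero])
      have hs2 := Triangle.shift_distinguished _ hT2 1
      obtain ⟨ψ₃, hψ₃⟩ : ∃ ψ₃ : Y⟦(1:ℤ)⟧ ⟶ Y,
          ψ₂ = ((1:ℤ).negOnePow • (shiftFunctor D (1:ℤ)).map b) ≫ ψ₃ :=
        Triangle.yoneda_exact₂ _ hs2 ψ₂ (by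
        show ((1:ℤ).negOnePow • (shiftFunctor D (1:ℤ)).map a) ≫ ψ₂ = 0
        rw [Linear.units_smul_comp, V7 ((shiftFunctor D (1:ℤ)).map a ≫ ψ₂), smul_zero])
      rw [hψ₂, hψ₃, V8 ψ₃, comp_zero, comp_zero]
    exact hψ.trans (by rw [hB1Y ψ]; exact comp_zero)
  -- Hom(M, Y⟦-1⟧) = 0
  have hMY : ∀ φ : M ⟶ Y⟦(-1:ℤ)⟧, φ = 0 := by
    intro φ
    have h0 : (shiftFunctor D (1:ℤ)).map φ ≫
        (shiftFunctorCompIsoId D (-1:ℤ) (1:ℤ) (by omega)).hom.app Y = 0 := hM1Y _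
    have h1 : (shiftFunctor D (1:ℤ)).map φ = 0 := by
      have h2 : (shiftFunctor D (1:ℤ)).map φ = ((shiftFunctor D (1:ℤ)).map φ ≫
          (shiftFunctorCompIsoId D (-1:ℤ) (1:ℤ) (by omega)).hom.app Y) ≫
          (shiftFunctorCompIsoId D (-1:ℤ) (1:ℤ) (by omega)).inv.app Y := by simp
      rw [h2, h0, zero_comp]
    exact (shiftFunctor D (1:ℤ)).map_injective (by rw [h1, Functor.map_zero])
  -- Hom(K, Y⟦-1⟧) = 0
  have hKY : ∀ ν : K ⟶ Y⟦(-1:ℤ)⟧, ν = 0 := by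
    intro ν
    obtain ⟨ξ, hξ⟩ := Triangle.yoneda_exact₃ _ hTK ν (by unfold Triangle.mk; dsimp; rw [hMY (p ≫ ν)])
    exact hξ.trans (by rw [V3 ξ]; exact comp_zero)
  -- uniqueness
  have huniq : ∀ ζ : K ⟶ K, ζ ≫ t = 0 → ζ = 0 := by
    intro ζ hζt
    have hζe : ζ ≫ e = 0 := by
      rw [he, ← assoc, hζt, zero_comp]
    obtain ⟨ζ', hζ'⟩ := Triangle.coyoneda_exact₃ _ hTK ζ hζe
    unfold Triangle.mk at ζ' hζ'; dsimp at ζ' hζ'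
    have h1 : (ζ' ≫ m) ≫ g = 0 := by
      rw [assoc, ← hw1, ← assoc, ← hζ', ht, ← assoc, hζt, zero_comp]
    obtain ⟨ζ2, hζ2⟩ := Triangle.coyoneda_exact₂ _ hT1 (ζ' ≫ m) h1
    unfold Triangle.mk at ζ2 hζ2; dsimp at ζ2 hζ2
    have h2 : (ζ' - ζ2 ≫ l) ≫ m = 0 := by
      rw [Preadditive.sub_comp, assoc, ← hl, ← hζ2, sub_self]
    obtain ⟨ν, hν⟩ := Triangle.coyoneda_exact₂ _ (inv_rot_of_distTriang _ hTM)
      (ζ' - ζ2 ≫ l) (by exact h2)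
    unfold Triangle.invRotate Triangle.mk at ν hν; dsimp at ν hν
    have hν0 : ν = 0 := hKY ν
    rw [hν0, zero_comp] at hν
    have hζ'eq : ζ' = ζ2 ≫ l := by rwa [sub_eq_zero] at hν
    have hlp : l ≫ p = 0 := comp_distTriang_mor_zero₁₂ _ hTK
    rw [hζ', hζ'eq, assoc, hlp, comp_zero]
  -- surjectivity : a section of t
  have hf0 : (a ≫ h) ≫ (shiftFunctor D (1:ℤ)).map l = 0 := by
    have hTM1 := Triangle.shift_distinguished _ hTM 1
    obtain ⟨ψ, hψ⟩ := Triangle.coyoneda_exact₂ _ (inv_rot_of_distTriang _ hTM1)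
      ((a ≫ h) ≫ (shiftFunctor D (1:ℤ)).map l) (by
        have hhf : h ≫ (shiftFunctor D (1:ℤ)).map f = 0 := comp_distTriang_mor_zero₃₁ _ hT1
        show ((a ≫ h) ≫ (shiftFunctor D (1:ℤ)).map l) ≫ ((1:ℤ).negOnePow • (shiftFunctor D (1:ℤ)).map m) = 0
        rw [Linear.comp_units_smul, assoc, assoc, ← Functor.map_comp, ← hl, hhf, comp_zero,
          smul_zero])
    dsimp at ψ hψ
    have hψ0 : ψ = 0 := hz_tgt ((shiftFunctorCompIsoId D (1:ℤ) (-1:ℤ) (by omega)).app Y) V4 ψ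
    exact hψ.trans (by rw [hψ0]; exact zero_comp)
  obtain ⟨r₀, hr₀⟩ := Triangle.coyoneda_exact₁ _ hTK (a ≫ h) hf0
  unfold Triangle.mk at r₀ hr₀; dsimp at r₀ hr₀
  -- correction
  have hδ : ((𝟙 X - r₀ ≫ t) ≫ a) ≫ h = 0 := by
    rw [Preadditive.sub_comp, Preadditive.sub_comp, id_comp, assoc, assoc, ← he, ← hr₀, sub_self]
  obtain ⟨η, hη⟩ := Triangle.coyoneda_exact₃ _ hT1 ((𝟙 X - r₀ ≫ t) ≫ a) hδ
  unfold Triangle.mk at η hη; dsimp at η hη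
  have hηρ : η ≫ (g ≫ b) = 0 := by
    rw [← assoc, ← hη, assoc, hab, comp_zero]
  obtain ⟨ξ, hξ⟩ := Triangle.coyoneda_exact₂ _ hTM η hηρ
  unfold Triangle.mk at ξ hξ; dsimp at ξ hξ
  have h3 : ((ξ ≫ p ≫ t) - (𝟙 X - r₀ ≫ t)) ≫ a = 0 := by
    rw [Preadditive.sub_comp, assoc, assoc, ← ht, hw1, ← assoc, ← hξ, ← hη, sub_self]
  obtain ⟨ψ', hψ'⟩ := Triangle.coyoneda_exact₂ _ (inv_rot_of_distTriang _ hT2)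
    ((ξ ≫ p ≫ t) - (𝟙 X - r₀ ≫ t)) (by exact h3)
  unfold Triangle.invRotate Triangle.mk at ψ' hψ'; dsimp at ψ' hψ'
  rw [V5 ψ', zero_comp] at hψ'
  have hcorr : ξ ≫ p ≫ t = 𝟙 X - r₀ ≫ t := by rwa [sub_eq_zero] at hψ'
  have hrt : (r₀ + ξ ≫ p) ≫ t = 𝟙 X := by
    rw [Preadditive.add_comp, assoc, hcorr]; abel
  have htr : t ≫ (r₀ + ξ ≫ p) = 𝟙 K := by
    have := huniq (𝟙 K - t ≫ (r₀ + ξ ≫ p)) (by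
      rw [Preadditive.sub_comp, id_comp, assoc, hrt, comp_id, sub_self])
    rwa [sub_eq_zero, eq_comm] at this
  haveI : IsIso t := ⟨r₀ + ξ ≫ p, htr, hrt⟩
  refine ⟨M, l, p ≫ t, inv t ≫ e, m, g ≫ b, s, rfl, hl.symm, ?_, hTM⟩
  refine isomorphic_distinguished _ hTK _ ?_
  refine Triangle.isoMk _ _ (Iso.refl A) (Iso.refl M) (asIso t).symm ?_ ?_ ?_
  · unfold Triangle.mk; dsimp; rw [id_comp, comp_id]
  · unfold Triangle.mk; dsimp; rw [id_comp, assoc, IsIso.hom_inv_id, comp_id]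
  · unfold Triangle.mk; dsimp; rw [CategoryTheory.Functor.map_id, comp_id]

lemma negOne_smul_hom {P Q : D} (f : P ⟶ Q) : (-1 : ℤˣ) • f = -f := by
  rw [Units.smul_def]
  simp

/-- Merge lemma: a TR-only octahedron substitute for composing two extension steps. -/
lemma ML {U V W P R : D} (x : U ⟶ V) (π : V ⟶ P) (θ : P ⟶ U⟦(1:ℤ)⟧)
    (hTA : Triangle.mk x π θ ∈ distTriang D)
    (y : V ⟶ W) (π' : W ⟶ R) (θ' : R ⟶ V⟦(1:ℤ)⟧)
    (hTB : Triangle.mk y π' θ' ∈ distTriang D)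
    (N1 : ∀ φ : U⟦(1:ℤ)⟧ ⟶ R, φ = 0)
    (N2 : ∀ φ : U⟦(1:ℤ)⟧ ⟶ P, φ = 0)
    (N3 : ∀ φ : V⟦(1:ℤ)⟧ ⟶ R, φ = 0)
    (N4 : ∀ φ : U ⟶ P, φ = 0)
    (N6 : ∀ φ : P⟦(1:ℤ)⟧ ⟶ R, φ = 0) :
    ∃ (G : D) (q : W ⟶ G) (r : G ⟶ U⟦(1:ℤ)⟧) (α : P ⟶ G) (β : G ⟶ R) (δ : R ⟶ P⟦(1:ℤ)⟧),
      (Triangle.mk (x ≫ y) q r ∈ distTriang D) ∧ (Triangle.mk α β δ ∈ distTriang D) := by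
  obtain ⟨G, q, r, hTG⟩ := distinguished_cocone_triangle (x ≫ y)
  obtain ⟨α, hα1, hα2⟩ := complete_distinguished_triangle_morphism
    (Triangle.mk x π θ) (Triangle.mk (x ≫ y) q r) hTA hTG (𝟙 U) y (by unfold Triangle.mk; dsimp; rw [id_comp])
  unfold Triangle.mk at α hα1 hα2; dsimp at α hα1 hα2
  rw [CategoryTheory.Functor.map_id, comp_id] at hα2
  obtain ⟨β, hβ1, hβ2⟩ := complete_distinguished_triangle_morphism
    (Triangle.mk (x ≫ y) q r) (Triangle.mk y π' θ') hTG hTB x (𝟙 W) (by unfold Triangle.mk; dsimp; rw [comp_id])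
  unfold Triangle.mk at β hβ1 hβ2; dsimp at β hβ1 hβ2
  rw [id_comp] at hβ1
  obtain ⟨K, u₀, v₀, hTK⟩ := distinguished_cocone_triangle α
  -- α ≫ β = 0
  have hyπ' : y ≫ π' = 0 := comp_distTriang_mor_zero₁₂ _ hTB
  have hαβ : α ≫ β = 0 := by
    obtain ⟨ξ, hξ⟩ := Triangle.yoneda_exact₃ _ hTA (α ≫ β) (by
      unfold Triangle.mk; dsimp
      rw [← assoc, hα1, assoc, hβ1, hyπ'])
    exact hξ.trans (by rw [N1 ξ]; exact comp_zero)
  -- τ : K ⟶ R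
  obtain ⟨τ, hτ⟩ := Triangle.yoneda_exact₂ _ hTK β hαβ
  unfold Triangle.mk at τ hτ; dsimp at τ hτ
  -- ς : R ⟶ K via TR3₁ on double rotations
  obtain ⟨ς, hς1, hς2⟩ : ∃ ς : R ⟶ K, θ' ≫ (shiftFunctor D (1:ℤ)).map π = ς ≫ v₀ ∧
      (-(shiftFunctor D (1:ℤ)).map π') ≫ (shiftFunctor D (1:ℤ)).map ς = (shiftFunctor D (1:ℤ)).map q ≫ (-(shiftFunctor D (1:ℤ)).map u₀) :=
    complete_distinguished_triangle_morphism₁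
    ((Triangle.mk y π' θ').rotate.rotate) ((Triangle.mk α u₀ v₀).rotate.rotate)
    (rot_of_distTriang _ (rot_of_distTriang _ hTB))
    (rot_of_distTriang _ (rot_of_distTriang _ hTK))
    ((shiftFunctor D (1:ℤ)).map π) ((shiftFunctor D (1:ℤ)).map q) (by
      show (-(shiftFunctor D (1:ℤ)).map y) ≫ (shiftFunctor D (1:ℤ)).map q = (shiftFunctor D (1:ℤ)).map π ≫ (-(shiftFunctor D (1:ℤ)).map α)
      rw [Preadditive.neg_comp, Preadditive.comp_neg, neg_inj, ← Functor.map_comp,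
        ← Functor.map_comp, hα1])
  have hς2' : π' ≫ ς = q ≫ u₀ := by
    apply (shiftFunctor D (1:ℤ)).map_injective
    rw [Functor.map_comp, Functor.map_comp]
    rw [Preadditive.neg_comp, Preadditive.comp_neg, neg_inj] at hς2
    exact hς2
  -- ς ≫ τ = 𝟙 R
  have hςτ : ς ≫ τ = 𝟙 R := by
    have h1 : π' ≫ (ς ≫ τ - 𝟙 R) = 0 := by
      rw [Preadditive.comp_sub, ← assoc, hς2', assoc, ← hτ, hβ1, comp_id, sub_self]
    obtain ⟨ξ, hξ⟩ := Triangle.yoneda_exact₃ _ hTB (ς ≫ τ - 𝟙 R) h1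
    unfold Triangle.mk at ξ hξ; dsimp at ξ hξ
    rw [N3 ξ, comp_zero] at hξ
    rwa [sub_eq_zero] at hξ
  -- the defect u₀ - β ≫ ς factors as r ≫ Ψg ≫ u₀
  have hqD : q ≫ (u₀ - β ≫ ς) = 0 := by
    rw [Preadditive.comp_sub, ← assoc, hβ1, hς2', sub_self]
  obtain ⟨Ψ, hΨ⟩ := Triangle.yoneda_exact₃ _ hTG (u₀ - β ≫ ς) hqD
  unfold Triangle.mk at Ψ hΨ; dsimp at Ψ hΨ
  have hΨv : Ψ ≫ v₀ = 0 := hz_shift 1 N4 _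
  obtain ⟨Ψg, hΨg⟩ := Triangle.coyoneda_exact₃ _ hTK Ψ hΨv
  unfold Triangle.mk at Ψg hΨg; dsimp at Ψg hΨg
  -- Ψg ≫ r = 0
  have hΨgr : Ψg ≫ r = 0 := by
    have hrz : r ≫ (shiftFunctor D (1:ℤ)).map (x ≫ y) = 0 := comp_distTriang_mor_zero₃₁ _ hTG
    have h1 : ((Ψg ≫ r) ≫ (shiftFunctor D (1:ℤ)).map x) ≫ (shiftFunctor D (1:ℤ)).map y = 0 := by
      rw [assoc, assoc, ← Functor.map_comp, ← assoc, assoc Ψg, hrz, comp_zero]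
    have hTB1 := Triangle.shift_distinguished _ hTB 1
    obtain ⟨ψ₄, hψ₄⟩ := Triangle.coyoneda_exact₂ _ (inv_rot_of_distTriang _ hTB1)
      ((Ψg ≫ r) ≫ (shiftFunctor D (1:ℤ)).map x) (by
        show ((Ψg ≫ r) ≫ (shiftFunctor D (1:ℤ)).map x) ≫ ((1:ℤ).negOnePow • (shiftFunctor D (1:ℤ)).map y) = 0
        rw [Linear.comp_units_smul, h1, smul_zero])
    dsimp at ψ₄ hψ₄
    have hψ₄0 : ψ₄ = 0 :=
      hz_tgt ((shiftFunctorCompIsoId D (1:ℤ) (-1:ℤ) (by omega)).app R) N1 ψ₄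
    replace hψ₄ : (Ψg ≫ r) ≫ (shiftFunctor D (1:ℤ)).map x = 0 := hψ₄.trans (by rw [hψ₄0]; exact zero_comp)
    have hTA1 := Triangle.shift_distinguished _ hTA 1
    obtain ⟨ψ₅, hψ₅⟩ := Triangle.coyoneda_exact₂ _ (inv_rot_of_distTriang _ hTA1)
      (Ψg ≫ r) (by
        show (Ψg ≫ r) ≫ ((1:ℤ).negOnePow • (shiftFunctor D (1:ℤ)).map x) = 0
        rw [Linear.comp_units_smul, hψ₄, smul_zero])
    dsimp at ψ₅ hψ₅
    have hψ₅0 : ψ₅ = 0 :=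
      hz_tgt ((shiftFunctorCompIsoId D (1:ℤ) (-1:ℤ) (by omega)).app P) N2 ψ₅
    exact hψ₅.trans (by rw [hψ₅0]; exact zero_comp)
  -- idempotency
  have hζζ : (𝟙 K - τ ≫ ς) ≫ (𝟙 K - τ ≫ ς) = 𝟙 K - τ ≫ ς := by
    have h0 : τ ≫ ς ≫ τ ≫ ς = τ ≫ ς := by
      rw [← assoc ς τ ς, hςτ, id_comp]
    simp only [Preadditive.sub_comp, Preadditive.comp_sub, id_comp, comp_id, assoc]
    rw [h0]
    abel
  have hDfact : u₀ - β ≫ ς = r ≫ Ψg ≫ u₀ := by rw [hΨ, hΨg]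
  have huζ : u₀ ≫ (𝟙 K - τ ≫ ς) = r ≫ Ψg ≫ u₀ := by
    rw [Preadditive.comp_sub, comp_id, ← hDfact]
    congr 1
    rw [← assoc, ← hτ]
  have huζ0 : u₀ ≫ (𝟙 K - τ ≫ ς) = 0 := by
    have h2 : u₀ ≫ (𝟙 K - τ ≫ ς) = (u₀ ≫ (𝟙 K - τ ≫ ς)) ≫ (𝟙 K - τ ≫ ς) := by
      rw [assoc, hζζ]
    rw [h2, huζ, assoc, assoc, huζ, ← assoc Ψg r, hΨgr, zero_comp, comp_zero]
  obtain ⟨ψ, hψ⟩ := Triangle.yoneda_exact₃ _ hTK (𝟙 K - τ ≫ ς) huζ0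
  unfold Triangle.mk at ψ hψ; dsimp at ψ hψ
  -- χψ := ψ ≫ v₀ = 0
  have hχα : (ψ ≫ v₀) ≫ (shiftFunctor D (1:ℤ)).map α = 0 := by
    have hvα : v₀ ≫ (shiftFunctor D (1:ℤ)).map α = 0 := comp_distTriang_mor_zero₃₁ _ hTK
    rw [assoc, hvα, comp_zero]
  have hχ0 : ψ ≫ v₀ = 0 := by
    have hθα : (ψ ≫ v₀) ≫ (shiftFunctor D (1:ℤ)).map θ = 0 := by
      rw [hα2, Functor.map_comp, ← assoc, hχα, zero_comp]
    have hTA1 := Triangle.shift_distinguished _ hTA 1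
    obtain ⟨ψ₇, hψ₇⟩ : ∃ ψ₇ : (shiftFunctor D (1:ℤ)).obj P ⟶ (shiftFunctor D (1:ℤ)).obj V,
        ψ ≫ v₀ = ψ₇ ≫ ((1:ℤ).negOnePow • (shiftFunctor D (1:ℤ)).map π) :=
      Triangle.coyoneda_exact₃ _ hTA1 (ψ ≫ v₀) (by
      show (ψ ≫ v₀) ≫ ((1:ℤ).negOnePow • ((shiftFunctor D (1:ℤ)).map θ ≫ (shiftFunctorComm D (1:ℤ) (1:ℤ)).hom.app U)) = 0
      simp only [Int.negOnePow_one, negOne_smul_hom]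
      rw [Preadditive.comp_neg, ← assoc, hθα, zero_comp, neg_zero])
    simp only [Int.negOnePow_one, negOne_smul_hom, Preadditive.comp_neg] at hψ₇
    have hψ₇' : ψ ≫ v₀ = (-ψ₇) ≫ (shiftFunctor D (1:ℤ)).map π := by
      rw [Preadditive.neg_comp, ← hψ₇]
    have h5 : ((-ψ₇) ≫ (shiftFunctor D (1:ℤ)).map y) ≫ (shiftFunctor D (1:ℤ)).map q = 0 := by
      rw [assoc, ← Functor.map_comp, ← hα1, Functor.map_comp, ← assoc, ← hψ₇', hχα]
    have hTG1 := Triangle.shift_distinguished _ hTG 1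
    obtain ⟨ψ₈, hψ₈⟩ : ∃ ψ₈ : (shiftFunctor D (1:ℤ)).obj P ⟶ (shiftFunctor D (1:ℤ)).obj U,
        (-ψ₇) ≫ (shiftFunctor D (1:ℤ)).map y = ψ₈ ≫ ((1:ℤ).negOnePow • (shiftFunctor D (1:ℤ)).map (x ≫ y)) :=
      Triangle.coyoneda_exact₂ _ hTG1
      ((-ψ₇) ≫ (shiftFunctor D (1:ℤ)).map y) (by
        show ((-ψ₇) ≫ (shiftFunctor D (1:ℤ)).map y) ≫ ((1:ℤ).negOnePow • (shiftFunctor D (1:ℤ)).map q) = 0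
        simp only [Int.negOnePow_one, negOne_smul_hom]
        rw [Preadditive.comp_neg, h5, neg_zero])
    simp only [Int.negOnePow_one, negOne_smul_hom, Preadditive.comp_neg] at hψ₈
    have hψ₈' : (-ψ₇) ≫ (shiftFunctor D (1:ℤ)).map y =
        (-ψ₈) ≫ ((shiftFunctor D (1:ℤ)).map x ≫ (shiftFunctor D (1:ℤ)).map y) := by
      rw [Preadditive.neg_comp ψ₈ ((shiftFunctor D (1:ℤ)).map x ≫ (shiftFunctor D (1:ℤ)).map y),
        ← Functor.map_comp]
      exact hψ₈
    have h6 : ((-ψ₇) - (-ψ₈) ≫ (shiftFunctor D (1:ℤ)).map x) ≫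
        (shiftFunctor D (1:ℤ)).map y = 0 := by
      rw [Preadditive.sub_comp, assoc, ← hψ₈', sub_self]
    have hTB1 := Triangle.shift_distinguished _ hTB 1
    obtain ⟨ψ₉, hψ₉⟩ := Triangle.coyoneda_exact₂ _ (inv_rot_of_distTriang _ hTB1)
      ((-ψ₇) - (-ψ₈) ≫ (shiftFunctor D (1:ℤ)).map x) (by
        show ((-ψ₇) - (-ψ₈) ≫ (shiftFunctor D (1:ℤ)).map x) ≫ ((1:ℤ).negOnePow • (shiftFunctor D (1:ℤ)).map y) = 0
        simp only [Int.negOnePow_one, negOne_smul_hom]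
        rw [Preadditive.comp_neg, h6, neg_zero])
    dsimp at ψ₉ hψ₉
    have hψ₉0 : ψ₉ = 0 :=
      hz_tgt ((shiftFunctorCompIsoId D (1:ℤ) (-1:ℤ) (by omega)).app R) N6 ψ₉
    replace hψ₉ : (-ψ₇) - (-ψ₈) ≫ (shiftFunctor D (1:ℤ)).map x = 0 := hψ₉.trans (by rw [hψ₉0]; exact zero_comp)
    have hΦeq : (-ψ₇) = (-ψ₈) ≫ (shiftFunctor D (1:ℤ)).map x := by rwa [sub_eq_zero] at hψ₉
    have hxπ : x ≫ π = 0 := comp_distTriang_mor_zero₁₂ _ hTA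
    rw [hψ₇', hΦeq, assoc, ← Functor.map_comp, hxπ, Functor.map_zero, comp_zero]
  -- conclude
  have hτς : τ ≫ ς = 𝟙 K := by
    have hζ : 𝟙 K - τ ≫ ς = 0 := by
      have h7 : 𝟙 K - τ ≫ ς = (𝟙 K - τ ≫ ς) ≫ (𝟙 K - τ ≫ ς) := hζζ.symm
      rw [h7, hψ, assoc, ← assoc ψ v₀ ψ, hχ0, zero_comp, comp_zero]
    have := sub_eq_zero.mp hζ
    exact this.symm
  haveI : IsIso τ := ⟨ς, hτς, hςτ⟩
  refine ⟨G, q, r, α, β, inv τ ≫ v₀, hTG, ?_⟩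
  refine isomorphic_distinguished _ hTK _ ?_
  refine Triangle.isoMk _ _ (Iso.refl P) (Iso.refl G) (asIso τ).symm ?_ ?_ ?_
  · unfold Triangle.mk; dsimp; rw [id_comp, comp_id]
  · unfold Triangle.mk; dsimp; rw [id_comp, hτ, assoc, IsIso.hom_inv_id, comp_id]
  · unfold Triangle.mk; dsimp; rw [CategoryTheory.Functor.map_id, comp_id]

/-- Vanishing of maps into shifts of objects of `A` in degrees `≤ c`. -/
def VanA (A : Set D) (T : D) (c : ℤ) : Prop :=
  ∀ Z ∈ A, ∀ d : ℤ, d ≤ c → ∀ f : T ⟶ Z⟦d⟧, f = 0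

lemma vanA_mono {A : Set D} {T : D} {c c' : ℤ} (h : c' ≤ c) (hv : VanA A T c) :
    VanA A T c' := fun Z hZ d hd f => hv Z hZ d (le_trans hd h) f

lemma vanA_isZero {A : Set D} {T : D} (h : IsZero T) (c : ℤ) : VanA A T c :=
  fun _ _ _ _ f => h.eq_of_src f 0

lemma vanA_of_iso {A : Set D} {T T' : D} (e : T ≅ T') {c : ℤ} (hv : VanA A T' c) :
    VanA A T c := fun Z hZ d hd f => hz_src e.symm (hv Z hZ d hd) f

lemma vanA_shift {A : Set D} {T : D} {c : ℤ} (hv : VanA A T c) (s : ℤ) :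
    VanA A (T⟦s⟧) (c + s) := by
  intro Z hZ d hd f
  have e : Z⟦d⟧ ≅ (Z⟦d - s⟧)⟦s⟧ :=
    (shiftFunctorAdd' D (d - s) s d (by omega)).app Z
  refine hz_tgt e ?_ f
  exact hz_shift s (hv Z hZ (d - s) (by omega))

lemma vanA_two {A : Set D} {T₁ T₂ T₃ : D} (f : T₁ ⟶ T₂) (g : T₂ ⟶ T₃)
    (h : T₃ ⟶ T₁⟦(1:ℤ)⟧) (hT : Triangle.mk f g h ∈ distTriang D) {c : ℤ}
    (h₁ : VanA A T₁ c) (h₃ : VanA A T₃ c) : VanA A T₂ c := by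
  intro Z hZ d hd φ
  obtain ⟨ψ, hψ⟩ := Triangle.yoneda_exact₂ _ hT φ (h₁ Z hZ d hd _)
  rw [hψ, h₃ Z hZ d hd ψ]; exact comp_zero

/-- heart vanishing in shifted form -/
lemma heart_hom {A : Set D}
    (hA1 : ∀ A₁ ∈ A, ∀ A₂ ∈ A, ∀ k : ℤ, k < 0 → ∀ f : A₁ ⟶ (shiftFunctor D k).obj A₂, f = 0)
    {P Q : D} (hP : P ∈ A) (hQ : Q ∈ A) {a b : ℤ} (hab : b < a) (f : P⟦a⟧ ⟶ Q⟦b⟧) : f = 0 := by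
  have e : Q⟦b⟧ ≅ (Q⟦b - a⟧)⟦a⟧ := (shiftFunctorAdd' D (b - a) a b (by omega)).app Q
  refine hz_tgt e ?_ f
  exact hz_shift a (hA1 P hP Q hQ (b - a) (by omega))

lemma vanA_single {A : Set D}
    (hA1 : ∀ A₁ ∈ A, ∀ A₂ ∈ A, ∀ k : ℤ, k < 0 → ∀ f : A₁ ⟶ (shiftFunctor D k).obj A₂, f = 0)
    {P : D} (hP : P ∈ A) (k : ℤ) : VanA A (P⟦k⟧) (k - 1) := by
  intro Z hZ d hd f
  exact heart_hom hA1 hP hZ (by omega) f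

/-- ℕ-indexed filtration predicate. -/
def NFilt (S : Set D) (E : D) (lo : ℤ) : Prop :=
  ∃ (n : ℕ) (Fl : ℕ → D) (g : ∀ i : ℕ, Fl i ⟶ Fl (i + 1)) (ks : ℕ → ℤ),
    IsZero (Fl 0) ∧ Fl n = E ∧ (∀ i j : ℕ, i < j → j < n → ks j < ks i) ∧
    (∀ i, i < n → lo ≤ ks i) ∧
    ∀ i, i < n → ∃ (Q : D) (q : Fl (i + 1) ⟶ Q) (h : Q ⟶ (Fl i)⟦(1:ℤ)⟧),
      (Triangle.mk (g i) q h ∈ distTriang D) ∧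
      ∃ B ∈ S, Nonempty (Q ≅ B⟦ks i⟧)

lemma nFilt_zero {S : Set D} {E : D} (h : IsZero E) (lo : ℤ) : NFilt S E lo :=
  ⟨0, fun _ => E, fun _ => 𝟙 E, fun _ => 0, h, rfl,
    fun _ _ _ hj => absurd hj (Nat.not_lt_zero _),
    fun _ hj => absurd hj (Nat.not_lt_zero _),
    fun _ hj => absurd hj (Nat.not_lt_zero _)⟩

lemma nFilt_mono {S : Set D} {E : D} {lo lo' : ℤ} (h : lo' ≤ lo) (hf : NFilt S E lo) :
    NFilt S E lo' := by
  obtain ⟨n, Fl, g, ks, h0, hl, ha, hb, hc⟩ := hf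
  exact ⟨n, Fl, g, ks, h0, hl, ha, fun i hi => le_trans h (hb i hi), hc⟩

/-- distinguished triangles transported along equalities of objects -/
lemma dist_of_eqs {X X' Y Y' Z : D} (hX : X' = X) (hY : Y' = Y) {f : X ⟶ Y} {q : Y ⟶ Z}
    {h : Z ⟶ X⟦(1:ℤ)⟧} (hd : Triangle.mk f q h ∈ distTriang D) :
    Triangle.mk (eqToHom hX ≫ f ≫ eqToHom hY.symm) (eqToHom hY ≫ q)
      (h ≫ (shiftFunctor D (1:ℤ)).map (eqToHom hX.symm)) ∈ distTriang D := by
  refine isomorphic_distinguished _ hd _ ?_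
  refine Triangle.isoMk _ _ (eqToIso hX) (eqToIso hY) (Iso.refl Z) ?_ ?_ ?_
  · unfold Triangle.mk; dsimp; simp
  · unfold Triangle.mk; dsimp; simp
  · unfold Triangle.mk; dsimp; simp [← Functor.map_comp]

/-- Extend a filtration one step at the top. -/
lemma nFilt_step {S : Set D} {F E Q B : D} {lo m : ℤ} (hF : NFilt S F lo) (hm : m < lo)
    (gnew : F ⟶ E) (q : E ⟶ Q) (hq : Q ⟶ F⟦(1:ℤ)⟧)
    (hdist : Triangle.mk gnew q hq ∈ distTriang D) (hB : B ∈ S) (eQ : Q ≅ B⟦m⟧) :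
    NFilt S E m := by
  obtain ⟨n, Fl, g, ks, h0, hl, ha, hb, hc⟩ := hF
  refine ⟨n + 1, fun t => if t ≤ n then Fl t else E,
    fun t =>
      if h1 : t + 1 ≤ n then eqToHom (if_pos (by omega)) ≫ g t ≫ eqToHom (if_pos h1).symm
      else if h2 : t = n then
        eqToHom (show (if t ≤ n then Fl t else E) = F by
          rw [if_pos (by omega : t ≤ n), h2, hl]) ≫ gnew ≫ eqToHom (if_neg h1).symm
      else eqToHom (show (if t ≤ n then Fl t else E) = (if t + 1 ≤ n then Fl (t+1) else E) by
        rw [if_neg (by omega : ¬ (t ≤ n)), if_neg h1]),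
    fun t => if t < n then ks t else m, ?_, ?_, ?_, ?_, ?_⟩
  · simpa [if_pos (Nat.zero_le n)] using h0
  · simp
  · intro i j hij hj
    dsimp only
    by_cases h1 : j < n
    · rw [if_pos h1, if_pos (by omega)]
      exact ha i j hij h1
    · have hj' : j = n := by omega
      rw [if_neg (by omega), if_pos (by omega)]
      exact lt_of_lt_of_le hm (hb i (by omega))
  · intro i hi
    dsimp only
    by_cases h1 : i < n
    · rw [if_pos h1]
      exact le_of_lt (lt_of_lt_of_le hm (hb i h1))
    · rw [if_neg h1]
  · intro i hi
    dsimp only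
    by_cases h1 : i < n
    · obtain ⟨Q', q', h', hd', B', hB', ⟨e'⟩⟩ := hc i h1
      rw [dif_pos (by omega : i + 1 ≤ n)]
      refine ⟨Q', eqToHom (if_pos (by omega)) ≫ q',
        h' ≫ (shiftFunctor D (1:ℤ)).map (eqToHom (if_pos (by omega) :
          (if i ≤ n then Fl i else E) = Fl i).symm), ?_,
        B', hB', ⟨e' ≪≫ eqToIso (by rw [if_pos h1])⟩⟩
      exact dist_of_eqs (if_pos (by omega)) (if_pos (by omega)) hd'
    · have h2 : n = i := by omega
      subst h2
      rw [dif_neg (by omega : ¬ (n + 1 ≤ n)), dif_pos rfl]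
      refine ⟨Q, eqToHom (if_neg (by omega)) ≫ q,
        hq ≫ (shiftFunctor D (1:ℤ)).map (eqToHom ((by rw [if_pos (by omega), hl] :
          (if n ≤ n then Fl n else E) = F)).symm), ?_,
        B, hB, ⟨eQ ≪≫ eqToIso (by rw [if_neg (by omega : ¬ (n < n))])⟩⟩
      exact dist_of_eqs (by rw [if_pos (by omega), hl]) (if_neg (by omega)) hdist


lemma exists_zero_Fc {A Tc Fc : Set D}
    (hA1 : ∀ A₁ ∈ A, ∀ A₂ ∈ A, ∀ k : ℤ, k < 0 → ∀ f : A₁ ⟶ (shiftFunctor D k).obj A₂, f = 0)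
    (hTc : Tc ⊆ A) (hFc : Fc ⊆ A)
    (hom_zero : ∀ X ∈ Tc, ∀ Y ∈ Fc, ∀ f : X ⟶ Y, f = 0)
    (decomp : ∀ E ∈ A, ∃ X ∈ Tc, ∃ Y ∈ Fc, ∃ (f : X ⟶ E) (g : E ⟶ Y)
      (h : Y ⟶ (shiftFunctor D (1 : ℤ)).obj X), Triangle.mk f g h ∈ distTriang D)
    {X₀ : D} (hX₀ : X₀ ∈ Tc) : ∃ ZF ∈ Fc, IsZero ZF := by
  obtain ⟨X₁, hX₁, Y₁, hY₁, f, g, h, hT⟩ := decomp X₀ (hTc hX₀)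
  have hg : g = 0 := hom_zero X₀ hX₀ Y₁ hY₁ g
  refine ⟨Y₁, hY₁, ?_⟩
  rw [IsZero.iff_id_eq_zero]
  obtain ⟨ξ, hξ⟩ := Triangle.yoneda_exact₃ _ hT (𝟙 Y₁) (by unfold Triangle.mk; dsimp; rw [hg, zero_comp])
  have hξ0 : ξ = 0 := hz_tgt (((shiftFunctorZero D ℤ).app Y₁).symm)
    (fun χ => heart_hom hA1 (hTc hX₁) (hFc hY₁) (by omega) χ) ξ
  rw [hξ, hξ0, comp_zero]; rfl

lemma exists_zero_Tc {A Tc Fc : Set D}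
    (hA1 : ∀ A₁ ∈ A, ∀ A₂ ∈ A, ∀ k : ℤ, k < 0 → ∀ f : A₁ ⟶ (shiftFunctor D k).obj A₂, f = 0)
    (hTc : Tc ⊆ A) (hFc : Fc ⊆ A)
    (hom_zero : ∀ X ∈ Tc, ∀ Y ∈ Fc, ∀ f : X ⟶ Y, f = 0)
    (decomp : ∀ E ∈ A, ∃ X ∈ Tc, ∃ Y ∈ Fc, ∃ (f : X ⟶ E) (g : E ⟶ Y)
      (h : Y ⟶ (shiftFunctor D (1 : ℤ)).obj X), Triangle.mk f g h ∈ distTriang D)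
    {Y₀ : D} (hY₀ : Y₀ ∈ Fc) : ∃ ZT ∈ Tc, IsZero ZT := by
  obtain ⟨X₁, hX₁, Y₂, hY₂, f, g, h, hT⟩ := decomp Y₀ (hFc hY₀)
  have hf : f = 0 := hom_zero X₁ hX₁ Y₀ hY₀ f
  refine ⟨X₁, hX₁, ?_⟩
  have h1 : 𝟙 ((shiftFunctor D (1:ℤ)).obj X₁) = 0 := by
    obtain ⟨ψ, hψ⟩ := Triangle.coyoneda_exact₁ _ hT (𝟙 _) (by
      unfold Triangle.mk; dsimp; rw [hf]; simp)
    unfold Triangle.mk at ψ hψ; dsimp at ψ hψ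
    have hψ0 : ψ = 0 := hz_tgt (((shiftFunctorZero D ℤ).app Y₂).symm)
      (fun χ => heart_hom hA1 (hTc hX₁) (hFc hY₂) (by omega) χ) ψ
    rw [hψ, hψ0, zero_comp]
  rw [IsZero.iff_id_eq_zero]
  exact (shiftFunctor D (1:ℤ)).map_injective (by rw [CategoryTheory.Functor.map_id, Functor.map_zero, h1])

end

end HRSAux

set_option maxHeartbeats 3200000 in
/-- (Happel–Reiten–Smalø) Let `A` be the heart of a bounded t-structure on a triangulated
category `D` and `(Tc, Fc)` a torsion pair in `A`. Then the tilted subcategory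
`A♯ = {E | H⁻¹(E) ∈ Fc, H⁰(E) ∈ Tc, Hⁱ(E) = 0 otherwise}`, i.e. the class of objects `E`
sitting in a distinguished triangle `Y[1] → E → X` with `Y ∈ Fc` and `X ∈ Tc`, is the
heart of a bounded t-structure on `D`. -/
theorem statement8 {D : Type u} [Category.{v} D] [HasZeroObject D] [Preadditive D]
    [HasShift D ℤ] [∀ n : ℤ, (shiftFunctor D n).Additive] [Pretriangulated D]
    (A : Set D) (hA : IsHeartOfBoundedTStructure A)
    (Tc Fc : Set D) (hTc : Tc ⊆ A) (hFc : Fc ⊆ A)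
    (hom_zero : ∀ X ∈ Tc, ∀ Y ∈ Fc, ∀ f : X ⟶ Y, f = 0)
    (decomp : ∀ E ∈ A, ∃ X ∈ Tc, ∃ Y ∈ Fc, ∃ (f : X ⟶ E) (g : E ⟶ Y)
      (h : Y ⟶ (shiftFunctor D (1 : ℤ)).obj X), Triangle.mk f g h ∈ distTriang D) :
    IsHeartOfBoundedTStructure
      {E : D | ∃ Y ∈ Fc, ∃ X ∈ Tc,
        ∃ (f : (shiftFunctor D (1 : ℤ)).obj Y ⟶ E) (g : E ⟶ X)
          (h : X ⟶ (shiftFunctor D (1 : ℤ)).obj ((shiftFunctor D (1 : ℤ)).obj Y)),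
        Triangle.mk f g h ∈ distTriang D} := by
    classical
  obtain ⟨hA1, hA2⟩ := hA
  constructor
  · -- Part 1 : Hom-vanishing in negative degrees
    rintro E₁ ⟨Y₁, hY₁, X₁, hX₁, f₁, g₁, h₁, hT₁⟩ E₂ ⟨Y₂, hY₂, X₂, hX₂, f₂, g₂, h₂, hT₂⟩ k hk f
    have hT₂k := Triangle.shift_distinguished _ hT₂ k
    -- maps X₁ ⟶ E₂⟦k⟧ vanish
    have hX : ∀ φ : X₁ ⟶ (shiftFunctor D k).obj E₂, φ = 0 := by
      intro φ
      obtain ⟨ψ, hψ⟩ := Triangle.coyoneda_exact₂ _ hT₂k φ (by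
        show φ ≫ (k.negOnePow • (shiftFunctor D k).map g₂) = 0
        rw [Linear.comp_units_smul,
          hA1 X₁ (hTc hX₁) X₂ (hTc hX₂) k hk (φ ≫ (shiftFunctor D k).map g₂), smul_zero])
      dsimp at ψ hψ
      have hψ0 : ψ = 0 := by
        refine HRSAux.hz_tgt (((shiftFunctorAdd' D 1 k (1+k) rfl).app Y₂).symm) ?_ ψ
        intro χ
        by_cases hk1 : 1 + k < 0
        · exact hA1 X₁ (hTc hX₁) Y₂ (hFc hY₂) (1+k) hk1 χ
        · have hk0 : (1 : ℤ) + k = 0 := by omega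
          refine HRSAux.hz_tgt
            (eqToIso (by rw [hk0]) ≪≫ (shiftFunctorZero D ℤ).app Y₂) ?_ χ
          intro χ'
          exact hom_zero X₁ hX₁ Y₂ hY₂ χ'
      exact hψ.trans (by rw [hψ0]; exact zero_comp)
    -- maps Y₁⟦1⟧ ⟶ E₂⟦k⟧ vanish
    have hY : ∀ φ : (shiftFunctor D (1:ℤ)).obj Y₁ ⟶ (shiftFunctor D k).obj E₂, φ = 0 := by
      intro φ
      obtain ⟨ψ, hψ⟩ := Triangle.coyoneda_exact₂ _ hT₂k φ (by
        show φ ≫ (k.negOnePow • (shiftFunctor D k).map g₂) = 0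
        rw [Linear.comp_units_smul,
          HRSAux.heart_hom hA1 (hFc hY₁) (hTc hX₂) (by omega)
            (φ ≫ (shiftFunctor D k).map g₂), smul_zero])
      dsimp at ψ hψ
      have hψ0 : ψ = 0 := by
        refine HRSAux.hz_tgt (((shiftFunctorAdd' D 1 k (1+k) rfl).app Y₂).symm) ?_ ψ
        intro χ
        exact HRSAux.heart_hom hA1 (hFc hY₁) (hFc hY₂) (by omega) χ
      exact hψ.trans (by rw [hψ0]; exact zero_comp)
    obtain ⟨φ', hφ'⟩ := Triangle.yoneda_exact₂ _ hT₁ f (hY _)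
    exact hφ'.trans (by rw [hX φ']; exact comp_zero)
  · -- Part 2 : filtrations
    set Ash : Set D := {E : D | ∃ Y ∈ Fc, ∃ X ∈ Tc,
      ∃ (f : (shiftFunctor D (1 : ℤ)).obj Y ⟶ E) (g : E ⟶ X)
        (h : X ⟶ (shiftFunctor D (1 : ℤ)).obj ((shiftFunctor D (1 : ℤ)).obj Y)),
      Triangle.mk f g h ∈ distTriang D} with hAshdef
    intro E hE
    obtain ⟨n, Fl, g, ks, h0, hlast, hanti, hfac⟩ := hA2 E hE
    rcases Nat.eq_zero_or_pos n with hn0 | hn1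
    · subst hn0
      refine absurd ?_ hE
      have h2 : Fin.last 0 = (0 : Fin 1) := Fin.ext (by simp)
      rw [← hlast, h2]
      exact h0
    choose Qf qf hf hdistf Af hAf hisof using hfac
    have isos : ∀ i, Qf i ≅ (Af i)⟦ks i⟧ := fun i => (hisof i).some
    choose Xf hXf Yf hYf xf yf zf hdecf using fun i : Fin n => decomp (Af i) (hAf i)
    -- zero objects in Tc and Fc
    obtain ⟨ZF, hZF, hZFz⟩ := HRSAux.exists_zero_Fc hA1 hTc hFc hom_zero decomp (hXf ⟨0, hn1⟩)
    obtain ⟨ZT, hZT, hZTz⟩ := HRSAux.exists_zero_Tc hA1 hTc hFc hom_zero decomp (hYf ⟨0, hn1⟩)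
    -- membership of torsion objects and shifted free objects in the tilted heart
    have memT : ∀ X' ∈ Tc, X' ∈ Ash := by
      intro X' hX'
      refine ⟨ZF, hZF, X', hX', 0, 𝟙 X', 0, ?_⟩
      refine isomorphic_distinguished _ (contractible_distinguished₁ X') _ ?_
      refine Triangle.isoMk _ _ ((HRSAux.isZero_shift hZFz 1).isoZero) (Iso.refl _)
        (Iso.refl _) ?_ ?_ ?_ <;> unfold Triangle.mk <;> simp
    have memY1 : ∀ Y' ∈ Fc, (shiftFunctor D (1:ℤ)).obj Y' ∈ Ash := by
      intro Y' hY'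
      refine ⟨Y', hY', ZT, hZT, 𝟙 _, 0, 0, ?_⟩
      refine isomorphic_distinguished _ (contractible_distinguished
        ((shiftFunctor D (1:ℤ)).obj Y')) _ ?_
      refine Triangle.isoMk _ _ (Iso.refl _) (Iso.refl _) hZTz.isoZero ?_ ?_ ?_ <;> unfold Triangle.mk <;> simp
      · rfl
      · exact comp_zero.symm
      · exact comp_zero.symm
    -- vanishing along the filtration
    have VA : ∀ (t : ℕ) (ht : t ≤ n) (c : ℤ),
        (∀ (u : ℕ) (hu : u < n), u < t → c ≤ ks ⟨u, hu⟩ - 1) →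
        HRSAux.VanA A (Fl ⟨t, by omega⟩) c := by
      intro t
      induction t with
      | zero =>
        intro ht c _
        refine HRSAux.vanA_isZero ?_ c
        rw [show (⟨0, by omega⟩ : Fin (n+1)) = 0 from rfl]
        exact h0
      | succ t ih =>
        intro ht c hc
        have htn : t < n := by omega
        refine HRSAux.vanA_two (g ⟨t, htn⟩) (qf ⟨t, htn⟩) (hf ⟨t, htn⟩) (hdistf ⟨t, htn⟩)
          (ih (by omega) c (fun u hu hut => hc u hu (by omega))) ?_
        refine HRSAux.vanA_of_iso (isos ⟨t, htn⟩) ?_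
        exact HRSAux.vanA_mono (hc t htn (by omega))
          (HRSAux.vanA_single hA1 (hAf ⟨t, htn⟩) (ks ⟨t, htn⟩))
    have vC : ∀ i : Fin n, HRSAux.VanA A (Fl i.castSucc) (ks i - 1) := by
      intro i
      refine VA i.1 (by omega) _ (fun u hu hui => ?_)
      have := hanti ⟨u, hu⟩ i (by exact hui)
      omega
    have vC' : ∀ i : Fin n, HRSAux.VanA A (Fl i.castSucc) (ks i) := by
      intro i
      refine VA i.1 (by omega) _ (fun u hu hui => ?_)
      have := hanti ⟨u, hu⟩ i (by exact hui)
      omega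
    -- the decomposition triangles of the graded factors
    have T2 : ∀ i : Fin n, ∃ (a : (Xf i)⟦ks i⟧ ⟶ Qf i) (b : Qf i ⟶ (Yf i)⟦ks i⟧)
        (c : (Yf i)⟦ks i⟧ ⟶ ((Xf i)⟦ks i⟧)⟦(1:ℤ)⟧), Triangle.mk a b c ∈ distTriang D := by
      intro i
      have hsh := Triangle.shift_distinguished _ (hdecf i) (ks i)
      refine ⟨((ks i).negOnePow • (shiftFunctor D (ks i)).map (xf i)) ≫ (isos i).inv,
        (isos i).hom ≫ ((ks i).negOnePow • (shiftFunctor D (ks i)).map (yf i)),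
        (ks i).negOnePow • ((shiftFunctor D (ks i)).map (zf i) ≫
          (shiftFunctorComm D 1 (ks i)).hom.app (Xf i)), ?_⟩
      refine isomorphic_distinguished _ hsh _ ?_
      refine Triangle.isoMk _ _ (Iso.refl _) (isos i) (Iso.refl _) ?_ ?_ ?_
      · show (((ks i).negOnePow • (shiftFunctor D (ks i)).map (xf i)) ≫ (isos i).inv) ≫ (isos i).hom = 𝟙 _ ≫ ((ks i).negOnePow • (shiftFunctor D (ks i)).map (xf i))
        rw [Category.id_comp, Category.assoc, Iso.inv_hom_id, Category.comp_id]
      · show ((isos i).hom ≫ ((ks i).negOnePow • (shiftFunctor D (ks i)).map (yf i))) ≫ 𝟙 _ = (isos i).hom ≫ ((ks i).negOnePow • (shiftFunctor D (ks i)).map (yf i))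
        rw [Category.comp_id]
      · show ((ks i).negOnePow • ((shiftFunctor D (ks i)).map (zf i) ≫ (shiftFunctorComm D 1 (ks i)).hom.app (Xf i))) ≫ (shiftFunctor D (1:ℤ)).map (𝟙 ((shiftFunctor D (ks i)).obj (Xf i))) = 𝟙 ((shiftFunctor D (ks i)).obj (Yf i)) ≫ ((ks i).negOnePow • ((shiftFunctor D (ks i)).map (zf i) ≫ (shiftFunctorComm D 1 (ks i)).hom.app (Xf i)))
        rw [Category.id_comp, CategoryTheory.Functor.map_id]; exact Category.comp_id _
    choose af bf cf hdT2 using T2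
    -- refine each step of the filtration via the recognition lemma
    have key : ∀ i : Fin n, ∃ (M : D) (l : Fl i.castSucc ⟶ M) (p : M ⟶ (Xf i)⟦ks i⟧)
        (e : (Xf i)⟦ks i⟧ ⟶ (Fl i.castSucc)⟦(1:ℤ)⟧) (mm : M ⟶ Fl i.succ)
        (ρ : Fl i.succ ⟶ (Yf i)⟦ks i⟧) (s : (Yf i)⟦ks i⟧ ⟶ M⟦(1:ℤ)⟧),
        (Triangle.mk l p e ∈ distTriang D) ∧ (Triangle.mk mm ρ s ∈ distTriang D) := by
      intro i
      obtain ⟨M, l, p, e, mm, ρ, s, _, _, hd1, hd2⟩ :=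
        HRSAux.RL (g i) (qf i) (hf i) (hdistf i) (af i) (bf i) (cf i) (hdT2 i)
          (fun φ => HRSAux.vanA_shift (vC i) 1 (Yf i) (hFc (hYf i)) (ks i) (by omega) φ)
          (fun φ => HRSAux.hz_tgt
            (((shiftFunctorAdd' D (ks i) (-1) (ks i - 1) (by omega)).app (Yf i)).symm)
            (HRSAux.vanA_shift (vC i) 1 (Yf i) (hFc (hYf i)) (ks i - 1) (by omega)) φ)
          (fun φ => HRSAux.hz_shift (ks i) (hom_zero (Xf i) (hXf i) (Yf i) (hYf i)) φ)
          (fun φ => HRSAux.hz_tgt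
            (((shiftFunctorAdd' D (ks i) (-1) (ks i - 1) (by omega)).app (Yf i)).symm)
            (fun χ => HRSAux.heart_hom hA1 (hTc (hXf i)) (hFc (hYf i)) (by omega) χ) φ)
          (fun φ => HRSAux.hz_src
            ((shiftFunctorAdd' D (ks i) 1 (ks i + 1) rfl).app (Xf i))
            (fun χ => HRSAux.heart_hom hA1 (hTc (hXf i)) (hFc (hYf i)) (by omega) χ) φ)
          (fun φ => HRSAux.hz_src
            ((shiftFunctorAdd' D (ks i) 1 (ks i + 1) rfl).app (Yf i))
            (fun χ => HRSAux.heart_hom hA1 (hFc (hYf i)) (hFc (hYf i)) (by omega) χ) φ)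
      exact ⟨M, l, p, e, mm, ρ, s, hd1, hd2⟩
    choose Mf lf pf ef mf ρf sf hdl hdm using key
    -- vanishing for the intermediate objects
    have vM : ∀ i : Fin n, HRSAux.VanA A (Mf i) (ks i - 1) := by
      intro i
      refine HRSAux.vanA_two (lf i) (pf i) (ef i) (hdl i) (vC i) ?_
      exact HRSAux.vanA_mono (by omega) (HRSAux.vanA_single hA1 (hTc (hXf i)) (ks i))
    have vS : ∀ i : Fin n, HRSAux.VanA A (Fl i.succ) (ks i - 1) := by
      intro i
      refine HRSAux.vanA_two (g i) (qf i) (hf i) (hdistf i) (vC i) ?_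
      refine HRSAux.vanA_of_iso (isos i) ?_
      exact HRSAux.vanA_single hA1 (hAf i) (ks i)

    -- the main induction
    have main : ∀ (t : ℕ) (ht : t < n), HRSAux.NFilt Ash (Mf ⟨t, ht⟩) (ks ⟨t, ht⟩) := by
      intro t
      induction t with
      | zero =>
        intro ht
        refine HRSAux.nFilt_step (HRSAux.nFilt_zero ?_ (ks ⟨0, ht⟩ + 1)) (by omega)
          (lf ⟨0, ht⟩) (pf ⟨0, ht⟩) (ef ⟨0, ht⟩) (hdl ⟨0, ht⟩) (memT _ (hXf ⟨0, ht⟩))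
          (Iso.refl _)
        have hcs : (⟨0, ht⟩ : Fin n).castSucc = (0 : Fin (n+1)) := Fin.ext (by simp)
        rw [hcs]
        exact h0
      | succ t ih =>
        intro ht
        have htn : t < n := by omega
        have hlt : ks ⟨t+1, ht⟩ < ks ⟨t, htn⟩ :=
          hanti ⟨t, htn⟩ ⟨t+1, ht⟩ (by exact Nat.lt_succ_self t)
        by_cases hcol : ks ⟨t+1, ht⟩ = ks ⟨t, htn⟩ - 1
        · -- merged step
          obtain ⟨G, q, r, α, β, δ, hTG, hTPR⟩ :=
            HRSAux.ML (mf ⟨t,htn⟩) (ρf ⟨t,htn⟩) (sf ⟨t,htn⟩) (hdm ⟨t,htn⟩)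
              (lf ⟨t+1,ht⟩) (pf ⟨t+1,ht⟩) (ef ⟨t+1,ht⟩) (hdl ⟨t+1,ht⟩)
              (fun φ => HRSAux.vanA_shift (vM ⟨t,htn⟩) 1 (Xf ⟨t+1,ht⟩)
                (hTc (hXf ⟨t+1,ht⟩)) (ks ⟨t+1,ht⟩) (by omega) φ)
              (fun φ => HRSAux.vanA_shift (vM ⟨t,htn⟩) 1 (Yf ⟨t,htn⟩)
                (hFc (hYf ⟨t,htn⟩)) (ks ⟨t,htn⟩) (by omega) φ)
              (fun φ => HRSAux.vanA_shift (vS ⟨t,htn⟩) 1 (Xf ⟨t+1,ht⟩)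
                (hTc (hXf ⟨t+1,ht⟩)) (ks ⟨t+1,ht⟩) (by omega) φ)
              (fun φ => by
                obtain ⟨ψ, hψ⟩ := Triangle.yoneda_exact₂ _ (hdl ⟨t,htn⟩) φ
                  (vC' ⟨t,htn⟩ (Yf ⟨t,htn⟩) (hFc (hYf ⟨t,htn⟩)) (ks ⟨t,htn⟩) le_rfl _)
                exact hψ.trans (by
                  rw [HRSAux.hz_shift (ks ⟨t,htn⟩)
                    (hom_zero _ (hXf ⟨t,htn⟩) _ (hYf ⟨t,htn⟩)) ψ]; exact comp_zero))
              (fun φ => HRSAux.hz_src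
                ((shiftFunctorAdd' D (ks ⟨t,htn⟩) 1 (ks ⟨t,htn⟩ + 1) rfl).app (Yf ⟨t,htn⟩))
                (fun χ => HRSAux.heart_hom hA1 (hFc (hYf ⟨t,htn⟩)) (hTc (hXf ⟨t+1,ht⟩))
                  (by omega) χ) φ)
          have e1 : (shiftFunctor D (1:ℤ)).obj (Yf ⟨t,htn⟩) ≅
              ((Yf ⟨t,htn⟩)⟦ks ⟨t,htn⟩⟧)⟦-(ks ⟨t+1,ht⟩)⟧ :=
            (shiftFunctorAdd' D (ks ⟨t,htn⟩) (-(ks ⟨t+1,ht⟩)) 1 (by omega)).app (Yf ⟨t,htn⟩)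
          have e3 : ((Xf ⟨t+1,ht⟩)⟦ks ⟨t+1,ht⟩⟧)⟦-(ks ⟨t+1,ht⟩)⟧ ≅ Xf ⟨t+1,ht⟩ :=
            (shiftFunctorCompIsoId D (ks ⟨t+1,ht⟩) (-(ks ⟨t+1,ht⟩)) (by omega)).app
              (Xf ⟨t+1,ht⟩)
          have hsh := Triangle.shift_distinguished _ hTPR (-(ks ⟨t+1,ht⟩))
          have hT'' : Triangle.mk
              (e1.hom ≫ ((-(ks ⟨t+1,ht⟩)).negOnePow •
                (shiftFunctor D (-(ks ⟨t+1,ht⟩))).map α))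
              (((-(ks ⟨t+1,ht⟩)).negOnePow •
                (shiftFunctor D (-(ks ⟨t+1,ht⟩))).map β) ≫ e3.hom)
              (e3.inv ≫ ((-(ks ⟨t+1,ht⟩)).negOnePow •
                ((shiftFunctor D (-(ks ⟨t+1,ht⟩))).map δ ≫
                  (shiftFunctorComm D 1 (-(ks ⟨t+1,ht⟩))).hom.app
                    ((Yf ⟨t,htn⟩)⟦ks ⟨t,htn⟩⟧))) ≫
                (shiftFunctor D (1:ℤ)).map e1.inv) ∈ distTriang D := by
            refine isomorphic_distinguished _ hsh _ ?_
            refine Triangle.isoMk _ _ e1 (Iso.refl _) e3.symm ?_ ?_ ?_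
            · show (e1.hom ≫ ((-(ks ⟨t+1,ht⟩)).negOnePow • (shiftFunctor D (-(ks ⟨t+1,ht⟩))).map α)) ≫ 𝟙 _ = e1.hom ≫ ((-(ks ⟨t+1,ht⟩)).negOnePow • (shiftFunctor D (-(ks ⟨t+1,ht⟩))).map α)
              rw [Category.comp_id]
            · show (((-(ks ⟨t+1,ht⟩)).negOnePow • (shiftFunctor D (-(ks ⟨t+1,ht⟩))).map β) ≫ e3.hom) ≫ e3.inv = 𝟙 _ ≫ ((-(ks ⟨t+1,ht⟩)).negOnePow • (shiftFunctor D (-(ks ⟨t+1,ht⟩))).map β)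
              rw [Category.id_comp, Category.assoc, Iso.hom_inv_id, Category.comp_id]
            · show (e3.inv ≫ ((-(ks ⟨t+1,ht⟩)).negOnePow • ((shiftFunctor D (-(ks ⟨t+1,ht⟩))).map δ ≫ (shiftFunctorComm D 1 (-(ks ⟨t+1,ht⟩))).hom.app ((Yf ⟨t,htn⟩)⟦ks ⟨t,htn⟩⟧))) ≫ (shiftFunctor D (1:ℤ)).map e1.inv) ≫
                (shiftFunctor D (1:ℤ)).map e1.hom = e3.inv ≫ ((-(ks ⟨t+1,ht⟩)).negOnePow • ((shiftFunctor D (-(ks ⟨t+1,ht⟩))).map δ ≫ (shiftFunctorComm D 1 (-(ks ⟨t+1,ht⟩))).hom.app ((Yf ⟨t,htn⟩)⟦ks ⟨t,htn⟩⟧)))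
              rw [Category.assoc, Category.assoc, ← Functor.map_comp, Iso.inv_hom_id,
                CategoryTheory.Functor.map_id]
              exact congrArg (fun u => e3.inv ≫ u) (Category.comp_id _)
          refine HRSAux.nFilt_step (ih htn) (by omega) (mf ⟨t,htn⟩ ≫ lf ⟨t+1,ht⟩) q r hTG
            ?_ (((shiftFunctorCompIsoId D (-(ks ⟨t+1,ht⟩)) (ks ⟨t+1,ht⟩) (by omega)).app
              G).symm)
          exact ⟨Yf ⟨t,htn⟩, hYf ⟨t,htn⟩, Xf ⟨t+1,ht⟩, hXf ⟨t+1,ht⟩, _, _, _, hT''⟩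
        · -- two separate steps
          have h1 : HRSAux.NFilt Ash (Fl (⟨t,htn⟩ : Fin n).succ) (ks ⟨t,htn⟩ - 1) :=
            HRSAux.nFilt_step (ih htn) (by omega) (mf ⟨t,htn⟩) (ρf ⟨t,htn⟩) (sf ⟨t,htn⟩)
              (hdm ⟨t,htn⟩) (memY1 _ (hYf ⟨t,htn⟩))
              ((shiftFunctorAdd' D 1 (ks ⟨t,htn⟩ - 1) (ks ⟨t,htn⟩) (by omega)).app
                (Yf ⟨t,htn⟩))
          exact HRSAux.nFilt_step h1 (by omega) (lf ⟨t+1,ht⟩) (pf ⟨t+1,ht⟩) (ef ⟨t+1,ht⟩)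
            (hdl ⟨t+1,ht⟩) (memT _ (hXf ⟨t+1,ht⟩)) (Iso.refl _)
    -- final step and conversion
    have hfinal : HRSAux.NFilt Ash E (ks ⟨n-1, by omega⟩ - 1) := by
      have hstep := HRSAux.nFilt_step (main (n-1) (by omega)) (by omega)
        (mf ⟨n-1, by omega⟩) (ρf ⟨n-1, by omega⟩) (sf ⟨n-1, by omega⟩) (hdm ⟨n-1, by omega⟩)
        (memY1 _ (hYf ⟨n-1, by omega⟩))
        ((shiftFunctorAdd' D 1 (ks ⟨n-1, by omega⟩ - 1) (ks ⟨n-1, by omega⟩) (by omega)).app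
          (Yf ⟨n-1, by omega⟩))
      have heq : Fl ((⟨n-1, by omega⟩ : Fin n).succ) = E := by
        have h2 : ((⟨n-1, by omega⟩ : Fin n).succ) = Fin.last n := Fin.ext (by simp; omega)
        rw [h2]
        exact hlast
      rwa [heq] at hstep
    obtain ⟨n', FlN, gN, ksN, h0', hl', ha', -, hc'⟩ := hfinal
    refine ⟨n', fun i => FlN i.1, fun i => gN i.1, fun i => ksN i.1, ?_, ?_, ?_, ?_⟩
    · simpa using h0'
    · exact hl'
    · intro i j hij
      exact ha' i.1 j.1 hij j.isLt
    · intro i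
      obtain ⟨Q, qq, hh, hd, B, hB, e⟩ := hc' i.1 i.isLt
      exact ⟨Q, qq, hh, hd, B, hB, e⟩
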